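/- For n ≥ 2 and 0 < μ ≤ (1/n)((n-1)/n)^(n-1), for every t in the interval [a_-(μ), a_+(μ)] one has n t² (1 + (n-1) μ² t^(-2n)) ≤ n², where a_±(μ) are the two positive roots of t^n - t^(n-1) + μ = 0. -/

import Mathlib

open Set

set_option maxHeartbeats 800000

/-- For `n ≥ 2` and `0 < μ ≤ (1/n)((n-1)/n)^(n-1)`, for every `t` in
`[am(μ), ap(μ)]` one has `n t² (1 + (n-1) μ² t^(-2n)) ≤ n²`, where `am(μ) ≤ ap(μ)`
are the two positive roots of `t^n - t^(n-1) + μ = 0`. -/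
theorem delaunay_potential_bound (n : ℕ) (hn : 2 ≤ n) (μ : ℝ)
    (hμ : 0 < μ) (hμ' : μ ≤ (1 / n) * (((n : ℝ) - 1) / n) ^ (n - 1))
    (am ap : ℝ) (ham : 0 < am) (hle : am ≤ ap)
    (hrootm : am ^ n - am ^ (n - 1) + μ = 0)
    (hrootp : ap ^ n - ap ^ (n - 1) + μ = 0)
    (hall : ∀ t : ℝ, 0 < t → t ^ n - t ^ (n - 1) + μ = 0 → am ≤ t ∧ t ≤ ap) :
    ∀ t ∈ Icc am ap, (n : ℝ) * t ^ 2 * (1 + ((n : ℝ) - 1) * μ ^ 2 / t ^ (2 * n))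
      ≤ (n : ℝ) ^ 2 := by
  obtain ⟨k, rfl⟩ : ∃ k, n = k + 2 := ⟨n - 2, by omega⟩
  rintro t ⟨htm, htp⟩
  have ht0 : 0 < t := lt_of_lt_of_le ham htm
  have hk1 : k + 2 - 1 = k + 1 := rfl
  rw [hk1] at hrootm hrootp
  set φ : ℝ → ℝ := fun s => s ^ (k + 1) - s ^ (k + 2) with hφ
  have hφm : φ am = μ := by simp only [hφ]; linarith
  have hφp : φ ap = μ := by simp only [hφ]; linarith
  set c : ℝ := ((k : ℝ) + 1) / ((k : ℝ) + 2) with hc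
  have hk2pos : (0 : ℝ) < (k : ℝ) + 2 := by positivity
  have hdiff : Differentiable ℝ φ := by
    simp only [hφ]; fun_prop
  have hderiv : ∀ x : ℝ, deriv φ x
      = ((k : ℝ) + 1) * x ^ k - ((k : ℝ) + 2) * x ^ (k + 1) := by
    intro x
    have h1 : HasDerivAt (fun s : ℝ => s ^ (k + 1) - s ^ (k + 2))
        (((k : ℝ) + 1) * x ^ k - ((k : ℝ) + 2) * x ^ (k + 1)) x := by
      have ha := hasDerivAt_pow (k + 1) x
      have hb := hasDerivAt_pow (k + 2) x
      have := ha.sub hb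
      refine this.congr_deriv ?_
      push_cast
      simp only [Nat.add_sub_cancel]
    simp only [hφ]
    exact h1.deriv
  have hmono : MonotoneOn φ (Icc 0 c) := by
    apply monotoneOn_of_deriv_nonneg (convex_Icc 0 c) hdiff.continuous.continuousOn
      hdiff.differentiableOn
    intro x hx
    rw [interior_Icc] at hx
    obtain ⟨hx0, hxc⟩ := hx
    rw [hderiv]
    have h2 : ((k : ℝ) + 2) * x ≤ (k : ℝ) + 1 := by
      rw [hc] at hxc
      have := (lt_div_iff₀ hk2pos).mp hxc
      linarith
    have hxk : (0 : ℝ) ≤ x ^ k := pow_nonneg hx0.le k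
    have hxs : x ^ (k + 1) = x ^ k * x := pow_succ x k
    nlinarith
  have hanti : AntitoneOn φ (Ici c) := by
    apply antitoneOn_of_deriv_nonpos (convex_Ici c) hdiff.continuous.continuousOn
      hdiff.differentiableOn
    intro x hx
    rw [interior_Ici] at hx
    have hx0 : 0 < x := lt_trans (by positivity) hx
    rw [hderiv]
    have h2 : (k : ℝ) + 1 ≤ ((k : ℝ) + 2) * x := by
      have hx' : ((k : ℝ) + 1) / ((k : ℝ) + 2) < x := hx
      have := (div_lt_iff₀ hk2pos).mp hx'
      linarith
    have hxk : (0 : ℝ) ≤ x ^ k := pow_nonneg hx0.le k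
    have hxs : x ^ (k + 1) = x ^ k * x := pow_succ x k
    nlinarith
  have hμt : μ ≤ φ t := by
    rcases le_total t c with h | h
    · have ham' : am ∈ Icc (0 : ℝ) c := ⟨ham.le, le_trans htm h⟩
      have ht' : t ∈ Icc (0 : ℝ) c := ⟨ht0.le, h⟩
      have := hmono ham' ht' htm
      rwa [hφm] at this
    · have hap' : ap ∈ Ici c := le_trans h htp
      have ht' : t ∈ Ici c := h
      have := hanti ht' hap' htp
      rwa [hφp] at this
  have hμt' : μ ≤ t ^ (k + 1) * (1 - t) := by
    have hts : t ^ (k + 2) = t ^ (k + 1) * t := pow_succ t (k + 1)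
    simp only [hφ] at hμt
    nlinarith
  have ht1 : t < 1 := by
    by_contra h
    push_neg at h
    have : t ^ (k + 1) * (1 - t) ≤ 0 := by
      apply mul_nonpos_of_nonneg_of_nonpos (pow_nonneg ht0.le _)
      linarith
    linarith
  have hsq : μ ^ 2 ≤ (t ^ (k + 1)) ^ 2 * (1 - t) ^ 2 := by
    have := mul_le_mul hμt' hμt' hμ.le (le_trans hμ.le hμt')
    nlinarith
  have hT : t ^ (2 * (k + 2)) = (t ^ (k + 1)) ^ 2 * t ^ 2 := by
    rw [show 2 * (k + 2) = (k + 1) * 2 + 2 by ring, pow_add, pow_mul]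
  have hTpos : (0 : ℝ) < t ^ (2 * (k + 2)) := pow_pos ht0 _
  have hA : t ^ 2 * (μ ^ 2 / t ^ (2 * (k + 2))) ≤ (1 - t) ^ 2 := by
    rw [mul_div_assoc', div_le_iff₀ hTpos, hT]
    nlinarith [mul_le_mul_of_nonneg_left hsq (sq_nonneg t)]
  have hA0 : (0 : ℝ) ≤ μ ^ 2 / t ^ (2 * (k + 2)) := div_nonneg (sq_nonneg μ) hTpos.le
  set A := μ ^ 2 / t ^ (2 * (k + 2)) with hAdef
  set N : ℝ := (k : ℝ) + 2 with hN
  have hcast : ((k + 2 : ℕ) : ℝ) = N := by push_cast; ring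
  rw [hcast]
  have hgoal : N * t ^ 2 * (1 + (N - 1) * A) ≤ N ^ 2 := by
    have h1 : N * (N - 1) * (t ^ 2 * A) ≤ N * (N - 1) * (1 - t) ^ 2 :=
      mul_le_mul_of_nonneg_left hA (by nlinarith [hk2pos])
    nlinarith [mul_nonneg (mul_nonneg hk2pos.le ht0.le) (sub_nonneg.mpr ht1.le),
      mul_nonneg hk2pos.le (mul_nonneg (by nlinarith : (0:ℝ) ≤ N - 2) ht0.le),
      mul_nonneg hk2pos.le (mul_nonneg (mul_nonneg hk2pos.le ht0.le) (sub_nonneg.mpr ht1.le))]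
  calc N * t ^ 2 * (1 + (N - 1) * μ ^ 2 / t ^ (2 * (k + 2)))
      = N * t ^ 2 * (1 + (N - 1) * A) := by rw [hAdef]; ring
    _ ≤ N ^ 2 := hgoal
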